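/- Let p be a prime and let a, b, c ∈ ℤ_p with a = 0, b ≠ 0 and c ≠ 0, and let P(x,y) = b·x + c·y. Then (ℤ_p, P) satisfies the right weak inverse property — that is, for all x, y, e₁, r₁, e₂, r₂ ∈ ℤ_p, if P(P(y,x), e₁) = P(y,x), P(P(y,x), r₁) = e₁, P(y, e₂) = y and P(y, r₂) = e₂, then P(x, r₁) = r₂ — if and only if b·c = 1 in ℤ_p. -/

import Mathlib

/-- For `P(x,y) = b*x + c*y` over `ℤ_p` (`p` prime, `a = 0`, `b ≠ 0`, `c ≠ 0`),
the quasigroup `(ℤ_p, P)` has the right weak inverse property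
`x·(y·x)^ρ = y^ρ` iff `b*c = 1`. -/
theorem stmt_19 (p : ℕ) (hp : p.Prime) (b c : ZMod p) (hb : b ≠ 0) (hc : c ≠ 0) :
    (∀ x y e₁ r₁ e₂ r₂ : ZMod p,
        b * (b * y + c * x) + c * e₁ = b * y + c * x →
        b * (b * y + c * x) + c * r₁ = e₁ →
        b * y + c * e₂ = y →
        b * y + c * r₂ = e₂ →
        b * x + c * r₁ = r₂) ↔
    b * c = 1 := by
  haveI : Fact p.Prime := ⟨hp⟩
  constructor
  · intro H
    have h := H 1 0 (1 - b) ((1 - b - b * c) * c⁻¹) 0 0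
      (by ring) (by field_simp; ring) (by ring) (by ring)
    field_simp at h
    linear_combination -h
  · intro hbc x y e₁ r₁ e₂ r₂ h1 h2 h3 h4
    have key : c * (b * x + c * r₁) = c * r₂ := by
      linear_combination c * h2 + h1 - h4 - b * h3 + (e₂ - b * y - c * x) * hbc
    exact mul_left_cancel₀ hc key
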